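/- Let X and Y be linear orders on subsets of ℕ. If X is a well order, then both X*Y and Y*X (the Kleene–Brouwer orderings of the double descent trees T(X,Y) and T(Y,X)) are well orders. -/

import Mathlib

/-- A tree on ℕ: a set of finite sequences of naturals closed under initial segments. -/
def IsTree (T : Set (List ℕ)) : Prop :=
  ∀ s ∈ T, ∀ t : List ℕ, t <+: s → t ∈ T

/-- `x : ℕ → ℕ` is a branch of `T`: all of its finite initial segments belong to `T`. -/
def IsBranch (T : Set (List ℕ)) (x : ℕ → ℕ) : Prop :=
  ∀ n : ℕ, (List.range n).map x ∈ T

/-- `[T]`, the set of branches of `T`. -/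
def Branches (T : Set (List ℕ)) : Set (ℕ → ℕ) := {x | IsBranch T x}

/-- The Kleene–Brouwer ordering on finite sequences of naturals: `s <_KB t` iff
`t` is a proper initial segment of `s`, or at the first position where `s` and `t`
differ, the entry of `s` is smaller. -/
def KB (s t : List ℕ) : Prop :=
  (t <+: s ∧ t ≠ s) ∨
    ∃ i, i < s.length ∧ i < t.length ∧ (∀ j, j < i → s.getD j 0 = t.getD j 0) ∧
      s.getD i 0 < t.getD i 0

/-- `r` is a strict linear order on the set `X`. -/
def IsLinOrdOn {α : Type*} (X : Set α) (r : α → α → Prop) : Prop :=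
  (∀ a ∈ X, ∀ b ∈ X, ∀ c ∈ X, r a b → r b c → r a c) ∧
  (∀ a ∈ X, ¬r a a) ∧
  (∀ a ∈ X, ∀ b ∈ X, r a b ∨ a = b ∨ r b a)

/-- `r` is a well order on the set `X`: a strict linear order on `X` that is
well-founded on `X`. -/
def IsWellOrdOn {α : Type*} (X : Set α) (r : α → α → Prop) : Prop :=
  IsLinOrdOn X r ∧ WellFounded (Subrel r X)

/-- The double descent tree `T(X,Y)` of two linear orders on subsets of ℕ:
finite sequences of (coded) pairs `(m_i, n_i)` with the `m_i` strictly descending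
in `X` and the `n_i` strictly descending in `Y`.  Pairs are coded by `Nat.pair`. -/
def DDT (X Y : Set ℕ) (rX rY : ℕ → ℕ → Prop) : Set (List ℕ) :=
  {l | (∀ i, i < l.length → (Nat.unpair (l.getD i 0)).1 ∈ X ∧ (Nat.unpair (l.getD i 0)).2 ∈ Y) ∧
       (∀ i, i + 1 < l.length →
         rX (Nat.unpair (l.getD (i + 1) 0)).1 (Nat.unpair (l.getD i 0)).1 ∧
         rY (Nat.unpair (l.getD (i + 1) 0)).2 (Nat.unpair (l.getD i 0)).2)}

namespace KBAux
noncomputable section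
open Classical

/-- Encode a list as a function to `WithTop ℕ`, with `⊤` past the end. -/
def Fl0 (l : List ℕ) : ℕ → WithTop ℕ :=
  fun i => if i < l.length then ((l.getD i 0 : ℕ) : WithTop ℕ) else ⊤

def Fl (l : List ℕ) : Lex (ℕ → WithTop ℕ) := toLex (Fl0 l)

lemma kb_iff_lex (s t : List ℕ) : KB s t ↔
    ∃ i, (∀ j, j < i → Fl0 s j = Fl0 t j) ∧ Fl0 s i < Fl0 t i := by
  constructor
  · rintro (⟨hpre, hne⟩ | ⟨i, hi, hi', hlow, hlt⟩)
    · have hlt : t.length < s.length := by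
        rcases lt_or_eq_of_le hpre.length_le with h | h
        · exact h
        · exact absurd (hpre.eq_of_length h) hne
      refine ⟨t.length, fun j hj => ?_, ?_⟩
      · have hjs : j < s.length := hj.trans hlt
        simp only [Fl0, if_pos hj, if_pos hjs]
        congr 1
        rw [List.getD_eq_getElem _ _ hjs, List.getD_eq_getElem _ _ hj]
        exact (hpre.getElem hj).symm
      · simp only [Fl0, if_pos hlt, if_neg (lt_irrefl t.length)]
        exact WithTop.coe_lt_top _
    · refine ⟨i, fun j hj => ?_, ?_⟩
      · simp only [Fl0, if_pos (hj.trans hi), if_pos (hj.trans hi')]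
        exact_mod_cast hlow j hj
      · simp only [Fl0, if_pos hi, if_pos hi']
        exact_mod_cast hlt
  · rintro ⟨i, hag, hlt⟩
    have his : i < s.length := by
      by_contra h
      simp only [Fl0, if_neg h] at hlt
      exact not_top_lt hlt
    by_cases hit : i < t.length
    · refine Or.inr ⟨i, his, hit, fun j hj => ?_, ?_⟩
      · have := hag j hj
        simp only [Fl0, if_pos (hj.trans his), if_pos (hj.trans hit)] at this
        exact_mod_cast this
      · simpa only [Fl0, if_pos his, if_pos hit, Nat.cast_lt] using hlt
    · push_neg at hit
      have hts : t.length < s.length := lt_of_le_of_lt hit his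
      have heq : t = s.take t.length := by
        apply List.ext_getElem
        · simp [le_of_lt hts]
        · intro j hj hj'
          have hjs : j < s.length := hj.trans hts
          have := hag j (lt_of_lt_of_le hj hit)
          simp only [Fl0, if_pos hj, if_pos hjs] at this
          have h2 : s.getD j 0 = t.getD j 0 := by exact_mod_cast this
          rw [List.getD_eq_getElem _ _ hjs, List.getD_eq_getElem _ _ hj] at h2
          simp [← h2]
      refine Or.inl ⟨heq ▸ List.take_prefix _ _, fun h => ?_⟩
      rw [h] at hts; exact lt_irrefl _ hts

lemma kb_iff_lt (s t : List ℕ) : KB s t ↔ Fl s < Fl t := kb_iff_lex s t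

lemma Fl0_inj : Function.Injective Fl0 := by
  intro s t h
  have hlen : s.length = t.length := by
    by_contra hne
    rcases Nat.lt_or_ge s.length t.length with hl | hl
    · have := congrFun h s.length
      simp only [Fl0, if_pos hl, if_neg (lt_irrefl s.length)] at this
      exact (WithTop.coe_ne_top this.symm).elim
    · rcases lt_or_eq_of_le hl with hl | hl
      · have := congrFun h t.length
        simp only [Fl0, if_pos hl, if_neg (lt_irrefl t.length)] at this
        exact WithTop.coe_ne_top this
      · exact hne hl.symm
  apply List.ext_getElem hlen
  intro j hj hj'
  have := congrFun h j
  simp only [Fl0, if_pos hj, if_pos hj'] at this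
  have h2 : s.getD j 0 = t.getD j 0 := by exact_mod_cast this
  rwa [List.getD_eq_getElem _ _ hj, List.getD_eq_getElem _ _ hj'] at h2

lemma kb_trans {a b c : List ℕ} (h1 : KB a b) (h2 : KB b c) : KB a c := by
  rw [kb_iff_lt] at *; exact h1.trans h2

lemma kb_irrefl (a : List ℕ) : ¬KB a a := by
  rw [kb_iff_lt]; exact lt_irrefl _

lemma kb_total (a b : List ℕ) : KB a b ∨ a = b ∨ KB b a := by
  rw [kb_iff_lt, kb_iff_lt]
  rcases lt_trichotomy (Fl a) (Fl b) with h | h | h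
  · exact Or.inl h
  · exact Or.inr (Or.inl (Fl0_inj (toLex.injective h)))
  · exact Or.inr (Or.inr h)


lemma kb_not_nil (t : List ℕ) : ¬KB [] t := by
  rintro (⟨hpre, hne⟩ | ⟨i, hi, _⟩)
  · exact hne (List.prefix_nil.mp hpre)
  · exact absurd hi (by simp)

lemma kb_getD_le {s t : List ℕ} {k : ℕ} (h : KB s t) (hks : k < s.length)
    (hkt : k < t.length) (hag : ∀ j, j < k → s.getD j 0 = t.getD j 0) :
    s.getD k 0 ≤ t.getD k 0 := by
  rcases h with ⟨hpre, _⟩ | ⟨i, hi, hi', hlow, hlt⟩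
  · rw [List.getD_eq_getElem _ _ hks, List.getD_eq_getElem _ _ hkt]
    exact le_of_eq (hpre.getElem hkt).symm
  · rcases lt_trichotomy i k with h | rfl | h
    · exact absurd (hag i h) (ne_of_lt hlt)
    · exact hlt.le
    · exact le_of_eq (hlow k h)

lemma kb_step {s t : List ℕ} {k : ℕ} (h : KB s t) (hs : s.length = k + 1)
    (ht : k + 1 ≤ t.length) (hag : ∀ j, j < k + 1 → s.getD j 0 = t.getD j 0) : False := by
  rcases h with ⟨hpre, hne⟩ | ⟨i, hi, hi', hlow, hlt⟩
  · have : t.length = s.length := le_antisymm hpre.length_le (by omega)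
    exact hne (hpre.eq_of_length this)
  · rw [hs] at hi
    exact absurd (hag i hi) (ne_of_lt hlt)

/-- Key lemma: if every list in `T` is `μ`-descending along `rZ` within `Z`, and
`rZ` is well-founded on `Z`, then KB is well-founded on `T`. -/
lemma kb_wf (T : Set (List ℕ)) (μ : ℕ → ℕ) (Z : Set ℕ) (rZ : ℕ → ℕ → Prop)
    (hwf : WellFounded (Subrel rZ Z))
    (hmem : ∀ l ∈ T, ∀ i, i < l.length → μ (l.getD i 0) ∈ Z)
    (hdesc : ∀ l ∈ T, ∀ i, i + 1 < l.length → rZ (μ (l.getD (i + 1) 0)) (μ (l.getD i 0))) :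
    WellFounded (Subrel KB T) := by
  haveI : IsStrictOrder (Subtype T) (Subrel KB T) :=
    { irrefl := fun a => kb_irrefl a.1
      trans := fun a b c h1 h2 => kb_trans h1 h2 }
  rw [RelEmbedding.wellFounded_iff_isEmpty]
  constructor
  intro e
  set f : ℕ → List ℕ := fun n => (e n).1 with hfdef
  have hfT : ∀ n, f n ∈ T := fun n => (e n).2
  have hd : ∀ n, KB (f (n + 1)) (f n) := fun n => e.map_rel_iff.2 (Nat.lt_succ_self n)
  have hne : ∀ n, f (n + 1) ≠ [] := fun n h => kb_not_nil (f n) (h ▸ hd n)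
  -- the invariant for the branch construction
  set Good : ℕ → ℕ → List ℕ → Prop := fun k N l =>
    l.length = k ∧ ∀ n, N ≤ n → k < (f n).length ∧ ∀ j, j < k → (f n).getD j 0 = l.getD j 0
    with hGood
  have h0 : Good 0 1 [] := by
    refine ⟨rfl, fun n hn => ⟨?_, fun j hj => absurd hj (Nat.not_lt_zero j)⟩⟩
    obtain ⟨m, rfl⟩ : ∃ m, n = m + 1 := ⟨n - 1, by omega⟩
    exact List.length_pos_iff.mpr (hne m)
  have hstep : ∀ k N l, Good k N l → ∃ N' v, N ≤ N' ∧ Good (k + 1) N' (l ++ [v]) := by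
    rintro k N l ⟨hlen, hinv⟩
    set g : ℕ → ℕ := fun n => (f n).getD k 0 with hg
    have hmono : ∀ n, N ≤ n → g (n + 1) ≤ g n := by
      intro n hn
      refine kb_getD_le (hd n) (hinv (n + 1) (by omega)).1 (hinv n hn).1 fun j hj => ?_
      rw [(hinv (n + 1) (by omega)).2 j hj, (hinv n hn).2 j hj]
    have hchain : ∀ n m, N ≤ n → n ≤ m → g m ≤ g n := by
      intro n m hn
      induction m with
      | zero =>
        intro h
        obtain rfl : n = 0 := by omega
        exact le_rfl
      | succ m ih =>
        intro h
        rcases Nat.lt_or_ge n (m + 1) with h' | h'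
        · exact (hmono m (by omega)).trans (ih (by omega))
        · have : n = m + 1 := by omega
          rw [this]
    obtain ⟨M, hMN, hMmin⟩ : ∃ M, N ≤ M ∧ ∀ n, N ≤ n → g M ≤ g n := by
      have hne' : (Set.range fun i => g (N + i)).Nonempty := ⟨g (N + 0), ⟨0, rfl⟩⟩
      obtain ⟨i, hi⟩ := Nat.sInf_mem hne'
      refine ⟨N + i, by omega, fun n hn => ?_⟩
      have : g n ∈ Set.range fun i => g (N + i) :=
        ⟨n - N, by show g (N + (n - N)) = g n; congr 1; omega⟩
      calc g (N + i) = sInf (Set.range fun i => g (N + i)) := hi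
        _ ≤ g n := Nat.sInf_le this
    have hgM : ∀ n, M ≤ n → g n = g M :=
      fun n h => le_antisymm (hchain M n hMN h) (hMmin n (hMN.trans h))
    refine ⟨M + 1, g M, by omega, by simp [hGood, hlen], fun n hn => ⟨?_, ?_⟩⟩
    · -- k + 1 < (f n).length
      by_contra hcon
      have h1 : k < (f n).length := (hinv n (by omega)).1
      have hlnk : (f n).length = k + 1 := by omega
      obtain ⟨m, rfl⟩ : ∃ m, n = m + 1 := ⟨n - 1, by omega⟩
      have hm : M ≤ m := by omega
      refine kb_step (hd m) hlnk (by exact (hinv m (by omega)).1) fun j hj => ?_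
      rcases Nat.lt_or_ge j k with hjk | hjk
      · rw [(hinv (m + 1) (by omega)).2 j hjk, (hinv m (by omega)).2 j hjk]
      · have : j = k := by omega
        subst this
        show g (m + 1) = g m
        rw [hgM (m + 1) (by omega), hgM m hm]
    · -- entries
      intro j hj
      rcases Nat.lt_or_ge j k with hjk | hjk
      · rw [(hinv n (by omega)).2 j hjk, List.getD_append _ _ _ _ (by omega)]
      · have : j = k := by omega
        subst this
        have : (l ++ [g M]).getD j 0 = g M := by
          rw [List.getD_append_right _ _ _ _ (by omega)]
          simp [hlen]
        rw [this]
        exact hgM n (by omega)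
  -- build the branch by recursion
  choose N' v _ hG using hstep
  let S : (k : ℕ) → {p : ℕ × List ℕ // Good k p.1 p.2} := fun k =>
    Nat.rec ⟨(1, []), h0⟩
      (fun k p => ⟨(N' k p.1.1 p.1.2 p.2, p.1.2 ++ [v k p.1.1 p.1.2 p.2]),
        hG k p.1.1 p.1.2 p.2⟩) k
  have hSsucc : ∀ k, ∃ w, (S (k + 1)).1.2 = (S k).1.2 ++ [w] := fun k => ⟨_, rfl⟩
  have hSlen : ∀ k, (S k).1.2.length = k := fun k => (S k).2.1
  set x : ℕ → ℕ := fun k => (S (k + 1)).1.2.getD k 0 with hx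
  have hcoh : ∀ k j, j < k → (S k).1.2.getD j 0 = x j := by
    intro k
    induction k with
    | zero => intro j hj; omega
    | succ k ih =>
      intro j hj
      rcases Nat.lt_or_ge j k with hjk | hjk
      · obtain ⟨w, hw⟩ := hSsucc k
        rw [hw, List.getD_append _ _ _ _ (by rw [hSlen]; omega)]
        exact ih j hjk
      · have : j = k := by omega
        subst this; rfl
  have key : ∀ k n, (S k).1.1 ≤ n → k < (f n).length ∧ ∀ j, j < k → (f n).getD j 0 = x j := by
    intro k n hn
    refine ⟨((S k).2.2 n hn).1, fun j hj => ?_⟩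
    rw [((S k).2.2 n hn).2 j hj, hcoh k j hj]
  -- the descending sequence in Z
  have hmem' : ∀ j, μ (x j) ∈ Z := by
    intro j
    have h1 := key (j + 1) (S (j + 1)).1.1 le_rfl
    have := hmem (f (S (j + 1)).1.1) (hfT _) j (by omega)
    rwa [h1.2 j (by omega)] at this
  have hdesc' : ∀ j, rZ (μ (x (j + 1))) (μ (x j)) := by
    intro j
    have h1 := key (j + 2) (S (j + 2)).1.1 le_rfl
    have := hdesc (f (S (j + 2)).1.1) (hfT _) j (by omega)
    rwa [h1.2 j (by omega), h1.2 (j + 1) (by omega)] at this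
  set zz : ℕ → ↥Z := fun j => ⟨μ (x j), hmem' j⟩ with hzz
  have hsub : ∀ j, Subrel rZ Z (zz (j + 1)) (zz j) := fun j => hdesc' j
  suffices h : ∀ a, Acc (Subrel rZ Z) a → ∀ j, a = zz j → False from
    h (zz 0) (hwf.apply _) 0 rfl
  intro a ha
  induction ha with
  | intro b hb ih =>
    intro j hj
    exact ih (zz (j + 1)) (hj ▸ hsub j) (j + 1) rfl

end
end KBAux

/-- If `X` is a well order (and `Y` a linear order) on subsets of ℕ,
then both `X*Y` and `Y*X` (the Kleene–Brouwer orderings of the double descent trees)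
are well orders. -/
theorem star_wellOrdered_of_left_wellOrdered (X Y : Set ℕ) (rX rY : ℕ → ℕ → Prop)
    (hX : IsWellOrdOn X rX) (hY : IsLinOrdOn Y rY) :
    IsWellOrdOn (DDT X Y rX rY) KB ∧ IsWellOrdOn (DDT Y X rY rX) KB := by
  have lin : ∀ T : Set (List ℕ), IsLinOrdOn T KB := fun T =>
    ⟨fun a _ b _ c _ h1 h2 => KBAux.kb_trans h1 h2, fun a _ => KBAux.kb_irrefl a,
      fun a _ b _ => KBAux.kb_total a b⟩
  constructor
  · refine ⟨lin _, KBAux.kb_wf _ (fun m => (Nat.unpair m).1) X rX hX.2 ?_ ?_⟩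
    · intro l hl i hi; exact (hl.1 i hi).1
    · intro l hl i hi; exact (hl.2 i hi).1
  · refine ⟨lin _, KBAux.kb_wf _ (fun m => (Nat.unpair m).2) X rX hX.2 ?_ ?_⟩
    · intro l hl i hi; exact (hl.1 i hi).2
    · intro l hl i hi; exact (hl.2 i hi).2
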